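/- Let 1 ≤ s < t ≤ n and let κ ∈ Γ_t. Then for the normalized elementary symmetric functions σ̃_k(κ) := (H_k(κ)/C(n,k))^{1/k} one has σ̃_t(κ) ≤ σ̃_s(κ). In particular, for 1 < s < t < n: σ̃_n ≤ σ̃_t on Γ₊ = Γ_n, σ̃_t ≤ σ̃_s on Γ_t, and σ̃_s ≤ σ̃_1 on Γ_s. -/

import Mathlib

noncomputable section

/-- The `k`-th elementary symmetric polynomial `H_k` of `κ ∈ ℝⁿ`. -/
def esymm (n k : ℕ) (κ : Fin n → ℝ) : ℝ :=
  ∑ s ∈ Finset.powersetCard k (Finset.univ : Finset (Fin n)), ∏ i ∈ s, κ i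

/-- The positive cone `Γ₊ ⊆ ℝⁿ`. -/
def GammaPlus (n : ℕ) : Set (Fin n → ℝ) := {κ | ∀ i, 0 < κ i}

/-- The Garding cone `Γ_k = {κ : H_1(κ) > 0, …, H_k(κ) > 0}`. -/
def GammaK (n k : ℕ) : Set (Fin n → ℝ) :=
  {κ | ∀ j : ℕ, 1 ≤ j → j ≤ k → 0 < esymm n j κ}

section Helpers

open Polynomial

/-- Differentiating `∏ (X + κᵢ)` produces `n-1` real numbers whose elementary symmetric
functions are proportional to those of `κ`. -/
lemma Mac.deriv_multiset (t : Multiset ℝ) (hn : 1 ≤ Multiset.card t) :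
    ∃ u : Multiset ℝ, Multiset.card u = Multiset.card t - 1 ∧
      ∀ j, j ≤ Multiset.card t - 1 →
        (Multiset.card t : ℝ) * u.esymm j = ((Multiset.card t : ℝ) - j) * t.esymm j := by
  set n := Multiset.card t with hcard
  set f : ℝ[X] := (t.map fun r => X + C r).prod with hf
  have hfm : f.Monic := monic_multiset_prod_of_monic _ _ fun r _ => monic_X_add_C r
  have hfdeg : f.natDegree = n := by
    rw [hf, natDegree_multiset_prod_of_monic _ (fun p hp => by
      obtain ⟨r, _, rfl⟩ := Multiset.mem_map.mp hp; exact monic_X_add_C r)]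
    simp [hcard]
  have hfroots : f.roots = t.map Neg.neg := by
    have h2 : f = ((t.map Neg.neg).map fun a => X - C a).prod := by
      rw [hf, Multiset.map_map]
      congr 1
      apply Multiset.map_congr rfl
      intros; simp [sub_neg_eq_add]
    rw [h2, roots_multiset_prod_X_sub_C]
  set g := derivative f with hg
  have hco : g.coeff (n - 1) = (n : ℝ) := by
    rw [hg, coeff_derivative]
    have h1 : f.coeff (n - 1 + 1) = 1 := by
      rw [show n - 1 + 1 = n by omega, ← hfdeg]; exact hfm.coeff_natDegree
    rw [h1, one_mul, Nat.cast_sub hn]; push_cast; ring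
  have hgdeg : g.natDegree = n - 1 := by
    refine le_antisymm ((natDegree_derivative_le f).trans_eq (by rw [hfdeg]))
      (le_natDegree_of_ne_zero ?_)
    rw [hco]
    exact (Nat.cast_pos.mpr hn).ne'
  have hglead : g.leadingCoeff = (n : ℝ) := by rw [leadingCoeff, hgdeg, hco]
  have hgroots : Multiset.card g.roots = g.natDegree := by
    have h1 : Multiset.card g.roots ≤ n - 1 := hgdeg ▸ card_roots' g
    have h2 : Multiset.card f.roots ≤ Multiset.card g.roots + 1 := card_roots_le_derivative f
    rw [hfroots, Multiset.card_map, ← hcard] at h2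
    omega
  refine ⟨g.roots.map Neg.neg, by rw [Multiset.card_map, hgroots, hgdeg], fun j hj => ?_⟩
  have hcoeff := Polynomial.coeff_eq_esymm_roots_of_card hgroots
      (k := n - 1 - j) (by omega)
  rw [hgdeg, hglead, show n - 1 - (n - 1 - j) = j by omega] at hcoeff
  have hder : g.coeff (n - 1 - j) = ((n : ℝ) - j) * t.esymm j := by
    rw [hg, coeff_derivative, show n - 1 - j + 1 = n - j by omega,
      Multiset.prod_X_add_C_coeff t (by omega : n - j ≤ Multiset.card t),
      show Multiset.card t - (n - j) = j by omega,
      Nat.cast_sub (by omega : j ≤ n - 1), Nat.cast_sub hn]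
    push_cast; ring
  rw [Multiset.esymm_neg]
  have key := hcoeff.symm.trans hder
  linear_combination key

/-- The normalized elementary symmetric function `H_k / C(n,k)` of a multiset. -/
def Mac.np (t : Multiset ℝ) (k : ℕ) : ℝ :=
  t.esymm k / ((Multiset.card t).choose k)

lemma Mac.mesymm_zero (t : Multiset ℝ) : t.esymm 0 = 1 := by
  simp [Multiset.esymm]

lemma Mac.np_zero (t : Multiset ℝ) : Mac.np t 0 = 1 := by
  simp [Mac.np, Mac.mesymm_zero]

lemma Mac.choose_id (n j : ℕ) (hj : j ≤ n - 1) (hn : 1 ≤ n) :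
    (n - j) * n.choose j = n * (n - 1).choose j := by
  obtain ⟨m, rfl⟩ : ∃ m, n = m + 1 := ⟨n - 1, by omega⟩
  simp only [Nat.add_sub_cancel]
  calc (m + 1 - j) * (m + 1).choose j = (m + 1).choose j * (m + 1 - j) := Nat.mul_comm _ _
    _ = (m + 1).choose (j + 1) * (j + 1) := (Nat.choose_succ_right_eq _ _).symm
    _ = (m + 1) * m.choose j := (Nat.add_one_mul_choose_eq m j).symm

lemma Mac.np_deriv (t : Multiset ℝ) (hn : 1 ≤ Multiset.card t) :
    ∃ u, Multiset.card u = Multiset.card t - 1 ∧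
      ∀ j ≤ Multiset.card t - 1, Mac.np u j = Mac.np t j := by
  obtain ⟨u, hcu, h⟩ := Mac.deriv_multiset t hn
  refine ⟨u, hcu, fun j hj => ?_⟩
  have h1 := h j hj
  set n := Multiset.card t with hn'
  have hC1 : (0:ℝ) < (n.choose j : ℝ) := by
    exact_mod_cast Nat.choose_pos (by omega)
  have hC2 : (0:ℝ) < ((n - 1).choose j : ℝ) := by
    exact_mod_cast Nat.choose_pos (by omega)
  rw [Mac.np, Mac.np, hcu, ← hn', div_eq_div_iff hC2.ne' hC1.ne']
  have hc : ((n : ℝ) - j) * (n.choose j : ℝ) = (n : ℝ) * ((n - 1).choose j : ℝ) := by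
    have := Mac.choose_id n j hj hn
    have h2 : ((n - j : ℕ) : ℝ) * (n.choose j : ℝ) = (n : ℝ) * ((n - 1).choose j : ℝ) := by
      exact_mod_cast congrArg (Nat.cast : ℕ → ℝ) this
    rwa [Nat.cast_sub (by omega)] at h2
  have hne : (n : ℝ) ≠ 0 := by exact_mod_cast (by omega : n ≠ 0)
  apply mul_left_cancel₀ hne
  calc (n:ℝ) * (u.esymm j * (n.choose j : ℝ))
      = ((n:ℝ) * u.esymm j) * (n.choose j : ℝ) := by ring
    _ = (((n:ℝ) - j) * t.esymm j) * (n.choose j : ℝ) := by rw [h1]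
    _ = t.esymm j * (((n:ℝ) - j) * (n.choose j : ℝ)) := by ring
    _ = t.esymm j * ((n:ℝ) * ((n - 1).choose j : ℝ)) := by rw [hc]
    _ = (n:ℝ) * (t.esymm j * ((n - 1).choose j : ℝ)) := by ring

lemma Mac.mesymm_card (t : Multiset ℝ) : t.esymm (Multiset.card t) = t.prod := by
  have h := Multiset.prod_X_add_C_coeff t (Nat.zero_le (Multiset.card t))
  simp only [Nat.sub_zero] at h
  rw [← h, Polynomial.coeff_zero_eq_eval_zero, Polynomial.eval_multiset_prod,
    Multiset.map_map]
  rw [show Multiset.map (eval 0 ∘ fun r => X + C r) t = Multiset.map id t from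
    Multiset.map_congr rfl (fun x _ => by simp), Multiset.map_id]

lemma Mac.newton_base (t : Multiset ℝ) (h2 : Multiset.card t = 2) :
    Mac.np t 0 * Mac.np t 2 ≤ Mac.np t 1 ^ 2 := by
  obtain ⟨a, b, rfl⟩ := Multiset.card_eq_two.mp h2
  have e0 : Multiset.esymm {a, b} 0 = 1 := by simp [Multiset.esymm]
  have e1 : Multiset.esymm {a, b} 1 = a + b := by
    simp [Multiset.esymm, Multiset.powersetCard_one]
    ring
  have e2 : Multiset.esymm {a, b} 2 = a * b := by
    have := Mac.mesymm_card {a, b}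
    rw [h2] at this
    rw [this]
    simp [Multiset.prod_cons]
  simp only [Mac.np, h2, e0, e1, e2]
  norm_num
  nlinarith [sq_nonneg (a - b)]

lemma Mac.esymm_eq_multiset (n k : ℕ) (κ : Fin n → ℝ) :
    esymm n k κ = (Multiset.map κ Finset.univ.val).esymm k :=
  (Finset.esymm_map_val κ _ k).symm

lemma Mac.multiset_eq_tuple (t : Multiset ℝ) :
    ∃ κ : Fin (Multiset.card t) → ℝ, Multiset.map κ Finset.univ.val = t := by
  refine ⟨fun i => t.toList.get (Fin.cast (by simp) i), ?_⟩
  rw [Fin.univ_val_map]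
  have h : List.ofFn (fun i : Fin (Multiset.card t) => t.toList.get (Fin.cast (by simp) i))
      = List.ofFn t.toList.get := by
    have h := List.ofFn_congr (Multiset.length_toList t) (fun i => t.toList.get i)
    simpa using h.symm
  rw [h, List.ofFn_get, Multiset.coe_toList]

lemma Mac.esymm_inv (n : ℕ) (κ : Fin n → ℝ) (hκ : ∀ i, κ i ≠ 0) (j : ℕ) (hj : j ≤ n) :
    esymm n (n - j) κ = (∏ i, κ i) * esymm n j (fun i => (κ i)⁻¹) := by
  rw [esymm, esymm, Finset.mul_sum]
  refine (Finset.sum_nbij' (fun s => sᶜ) (fun s => sᶜ) ?_ ?_ ?_ ?_ ?_).symm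
  · intro s hs
    rw [Finset.mem_powersetCard_univ] at hs ⊢
    rw [Finset.card_compl, hs, Fintype.card_fin]
  · intro s hs
    rw [Finset.mem_powersetCard_univ] at hs ⊢
    rw [Finset.card_compl, hs, Fintype.card_fin]
    omega
  · intro s _; simp
  · intro s _; simp
  · intro s hs
    rw [Finset.mem_powersetCard_univ] at hs
    have h1 : (∏ i ∈ s, κ i) * ∏ i ∈ s, (κ i)⁻¹ = 1 := by
      rw [← Finset.prod_mul_distrib]
      exact Finset.prod_eq_one fun i _ => mul_inv_cancel₀ (hκ i)
    have h2 := Finset.prod_mul_prod_compl s κ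
    show (∏ i, κ i) * ∏ i ∈ s, (κ i)⁻¹ = ∏ i ∈ sᶜ, κ i
    rw [← h2]
    calc (∏ i ∈ s, κ i) * (∏ i ∈ sᶜ, κ i) * ∏ i ∈ s, (κ i)⁻¹
        = ((∏ i ∈ s, κ i) * ∏ i ∈ s, (κ i)⁻¹) * ∏ i ∈ sᶜ, κ i := by ring
      _ = ∏ i ∈ sᶜ, κ i := by rw [h1, one_mul]

lemma Mac.mesymm_inv (t : Multiset ℝ) (h0 : (0:ℝ) ∉ t) (j : ℕ) (hj : j ≤ Multiset.card t) :
    t.esymm (Multiset.card t - j) = t.prod * (t.map (fun x => x⁻¹)).esymm j := by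
  obtain ⟨κ, hκ⟩ := Mac.multiset_eq_tuple t
  have hκ0 : ∀ i, κ i ≠ 0 := by
    intro i hi
    have hmem : κ i ∈ t := hκ ▸ Multiset.mem_map_of_mem κ (Finset.mem_val.mpr (Finset.mem_univ i))
    exact h0 (hi ▸ hmem)
  have h1 := Mac.esymm_inv (Multiset.card t) κ hκ0 j hj
  rw [Mac.esymm_eq_multiset, Mac.esymm_eq_multiset, hκ] at h1
  have h2 : Multiset.map (fun i => (κ i)⁻¹) Finset.univ.val
      = t.map (fun x => x⁻¹) := by
    calc Multiset.map (fun i => (κ i)⁻¹) Finset.univ.val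
        = Multiset.map (fun x => x⁻¹) (Multiset.map κ Finset.univ.val) := by
          rw [Multiset.map_map]; rfl
      _ = t.map (fun x => x⁻¹) := by rw [hκ]
  rw [h2] at h1
  have h3 : (∏ i, κ i) = t.prod := by
    calc (∏ i, κ i) = (Multiset.map κ Finset.univ.val).prod := rfl
      _ = t.prod := by rw [hκ]
  rwa [h3] at h1

/-- Newton's inequalities for arbitrary real numbers. -/
lemma Mac.newton_aux : ∀ N k (t : Multiset ℝ), Multiset.card t + k ≤ N → 1 ≤ k →
    k + 1 ≤ Multiset.card t → Mac.np t (k-1) * Mac.np t (k+1) ≤ Mac.np t k ^ 2 := by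
  intro N
  induction N with
  | zero => intro k t h hk hkn; omega
  | succ N IH =>
    intro k t hN hk hkn
    by_cases hcase : k + 1 ≤ Multiset.card t - 1
    · obtain ⟨u, hcu, hu⟩ := Mac.np_deriv t (by omega)
      rw [← hu (k-1) (by omega), ← hu k (by omega), ← hu (k+1) (by omega)]
      exact IH k u (by omega) hk (by omega)
    · set n := Multiset.card t with hn
      have hkn' : k + 1 = n := by omega
      by_cases hk1 : k = 1
      · subst hk1
        simpa using Mac.newton_base t (by omega)
      · by_cases h0 : (0:ℝ) ∈ t
        · have hz : Mac.np t (k+1) = 0 := by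
            rw [Mac.np, hkn', ← hn, Mac.mesymm_card, Multiset.prod_eq_zero h0, zero_div]
          rw [hz, mul_zero]; exact sq_nonneg _
        · set u := t.map (fun x : ℝ => x⁻¹) with hudef
          have hcu : Multiset.card u = n := by rw [hudef, Multiset.card_map]
          have IH2 : Mac.np u 0 * Mac.np u 2 ≤ Mac.np u 1 ^ 2 := IH 1 u (by omega) le_rfl (by omega)
          have key : ∀ j, j ≤ 2 → Mac.np t (n - j) = t.prod * Mac.np u j := by
            intro j hj
            rw [Mac.np, Mac.np, hcu, ← hn, Mac.mesymm_inv t h0 j (by omega),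
              Nat.choose_symm (by omega : j ≤ n)]
            rw [hudef]
            ring
          have e1 : k - 1 = n - 2 := by omega
          have e2 : k = n - 1 := by omega
          have e3 : k + 1 = n - 0 := by omega
          rw [e1, e3, e2, key 2 (by omega), key 1 (by omega), key 0 (by omega)]
          nlinarith [IH2, sq_nonneg t.prod]

lemma Mac.maclaurin_pow (p : ℕ → ℝ) (T : ℕ) (hpos : ∀ j, 1 ≤ j → j ≤ T → 0 < p j)
    (hp0 : p 0 = 1)
    (hnewton : ∀ j, 1 ≤ j → j + 1 ≤ T → p (j-1) * p (j+1) ≤ p j ^ 2) :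
    ∀ j, 1 ≤ j → j + 1 ≤ T → p (j+1) ^ j ≤ p j ^ (j+1) := by
  intro j
  induction j with
  | zero => omega
  | succ m IH =>
    intro _ hm2
    rcases Nat.eq_zero_or_pos m with rfl | hm
    · have h := hnewton 1 le_rfl (by omega)
      simpa [hp0] using h
    · have h2 : p (m+1) ^ m ≤ p m ^ (m+1) := IH hm (by omega)
      have h1 : p m * p (m+2) ≤ p (m+1) ^ 2 := by
        have := hnewton (m+1) (by omega) (by omega)
        simpa using this
      have ha : 0 < p m := hpos m hm (by omega)
      have hb : 0 < p (m+1) := hpos (m+1) (by omega) (by omega)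
      have hc : 0 < p (m+2) := hpos (m+2) (by omega) (by omega)
      have h3 : p (m+2) ^ (m+1) * p m ^ (m+1) ≤ p (m+1) ^ (m+2) * p m ^ (m+1) := by
        calc p (m+2) ^ (m+1) * p m ^ (m+1) = (p m * p (m+2)) ^ (m+1) := by
              rw [mul_pow]; ring
          _ ≤ (p (m+1) ^ 2) ^ (m+1) := pow_le_pow_left₀ (by positivity) h1 _
          _ = p (m+1) ^ (m+2) * p (m+1) ^ m := by rw [← pow_mul, ← pow_add]; ring_nf
          _ ≤ p (m+1) ^ (m+2) * p m ^ (m+1) := by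
              exact mul_le_mul_of_nonneg_left h2 (by positivity)
      exact le_of_mul_le_mul_right h3 (by positivity)

lemma Mac.maclaurin_rpow_step (p : ℕ → ℝ) (T : ℕ) (hpos : ∀ j, 1 ≤ j → j ≤ T → 0 < p j)
    (hp0 : p 0 = 1)
    (hnewton : ∀ j, 1 ≤ j → j + 1 ≤ T → p (j-1) * p (j+1) ≤ p j ^ 2)
    (j : ℕ) (hj : 1 ≤ j) (hjT : j + 1 ≤ T) :
    p (j+1) ^ (1 / ((j:ℝ)+1)) ≤ p j ^ (1 / (j:ℝ)) := by
  have hpw := Mac.maclaurin_pow p T hpos hp0 hnewton j hj hjT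
  have ha : 0 < p j := hpos j hj (by omega)
  have hb : 0 < p (j+1) := hpos (j+1) (by omega) hjT
  have hjr : (0:ℝ) < j := by exact_mod_cast hj
  set e : ℝ := 1 / ((j:ℝ) * ((j:ℝ)+1)) with he
  have hee : 0 ≤ e := by positivity
  have h := Real.rpow_le_rpow (by positivity) hpw hee
  rw [← Real.rpow_natCast (p (j+1)) j, ← Real.rpow_natCast (p j) (j+1),
    ← Real.rpow_mul hb.le, ← Real.rpow_mul ha.le] at h
  have e1 : (j:ℝ) * e = 1 / ((j:ℝ)+1) := by rw [he]; field_simp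
  have e2 : ((j+1 : ℕ):ℝ) * e = 1 / (j:ℝ) := by push_cast; rw [he]; field_simp
  rwa [e1, e2] at h

lemma Mac.maclaurin_rpow (p : ℕ → ℝ) (T : ℕ) (hpos : ∀ j, 1 ≤ j → j ≤ T → 0 < p j)
    (hp0 : p 0 = 1)
    (hnewton : ∀ j, 1 ≤ j → j + 1 ≤ T → p (j-1) * p (j+1) ≤ p j ^ 2)
    (s : ℕ) (hs : 1 ≤ s) :
    ∀ d, s + d ≤ T → p (s+d) ^ (1 / ((s:ℝ)+d)) ≤ p s ^ (1 / (s:ℝ)) := by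
  intro d
  induction d with
  | zero => intro _; simp
  | succ d IH =>
    intro hd
    have step := Mac.maclaurin_rpow_step p T hpos hp0 hnewton (s+d) (by omega) (by omega)
    have h1 : p (s + (d+1)) ^ (1 / ((s:ℝ)+(d+1))) ≤ p (s+d) ^ (1 / ((s:ℝ)+d)) := by
      rw [show s + (d+1) = (s+d) + 1 by omega]
      convert step using 3 <;> push_cast <;> ring
    have h2 := h1.trans (IH (by omega))
    convert h2 using 4
    exacts [rfl, Nat.cast_succ d]

end Helpers

/-- the normalized elementary symmetric functions
`σ̃_k = (H_k / C(n,k))^{1/k}` are monotone: for `1 ≤ s < t ≤ n` and `κ ∈ Γ_t`,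
`σ̃_t(κ) ≤ σ̃_s(κ)`. -/
theorem normalized_esymm_monotone (n s t : ℕ) (hs : 1 ≤ s) (hst : s < t) (htn : t ≤ n)
    (κ : Fin n → ℝ) (hκ : κ ∈ GammaK n t) :
    (esymm n t κ / (n.choose t : ℝ)) ^ (1 / (t : ℝ)) ≤
      (esymm n s κ / (n.choose s : ℝ)) ^ (1 / (s : ℝ)) := by
  set T : Multiset ℝ := Multiset.map κ Finset.univ.val with hT
  have hcT : Multiset.card T = n := by
    rw [hT, Multiset.card_map]
    exact Finset.card_univ.trans (Fintype.card_fin n)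
  have hnp : ∀ j, Mac.np T j = esymm n j κ / (n.choose j : ℝ) := by
    intro j
    rw [Mac.np, hcT, Mac.esymm_eq_multiset, hT]
  have hpos : ∀ j, 1 ≤ j → j ≤ t → 0 < Mac.np T j := by
    intro j h1 h2
    rw [hnp]
    exact div_pos (hκ j h1 h2) (by exact_mod_cast Nat.choose_pos (by omega))
  have hnewton : ∀ j, 1 ≤ j → j + 1 ≤ t →
      Mac.np T (j-1) * Mac.np T (j+1) ≤ Mac.np T j ^ 2 := by
    intro j h1 h2
    exact Mac.newton_aux (Multiset.card T + j) j T le_rfl h1 (by omega)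
  have final := Mac.maclaurin_rpow (Mac.np T) t hpos (Mac.np_zero T) hnewton s hs
    (t - s) (by omega)
  rw [show s + (t - s) = t by omega] at final
  rw [hnp s, hnp t] at final
  have hcast : (s:ℝ) + ((t - s : ℕ) : ℝ) = (t : ℝ) := by
    rw [Nat.cast_sub (by omega)]; ring
  rwa [hcast] at final
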